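/- Let m ≥ 1 be an integer and let α be a real number with α > 0 and α > m − 2. Define f : ℝ^m → ℝ by f(x) = ‖x‖^{−α}. Then the function x ↦ ‖iteratedFDeriv ℝ 2 f x‖ is not Lebesgue-integrable on the open unit ball B(0,1) ⊆ ℝ^m. -/

import Mathlib

open MeasureTheory Metric

noncomputable section

variable {F : Type*} [NormedAddCommGroup F] [InnerProductSpace ℝ F]

/-- The inner product as a continuous linear map `F →L[ℝ] F →L[ℝ] ℝ`. -/
noncomputable def innerCLM (F : Type*) [NormedAddCommGroup F] [InnerProductSpace ℝ F] :
    F →L[ℝ] F →L[ℝ] ℝ :=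
  (isBoundedBilinearMap_inner (𝕜 := ℝ) (E := F)).toContinuousLinearMap

@[simp] lemma innerCLM_apply (y z : F) : innerCLM F y z = inner ℝ y z := rfl

lemma hasFDerivAt_norm_rpow_neg {p : ℝ} (hp : 0 < p) {y : F} (hy : y ≠ 0) :
    HasFDerivAt (fun z : F => ‖z‖ ^ (-p))
      ((-p * ‖y‖ ^ (-p - 2)) • innerCLM F y) y := by
  have hyn : (0 : ℝ) < ‖y‖ := norm_pos_iff.2 hy
  have hfun : (fun z : F => ‖z‖ ^ (-p)) = fun z : F => (‖z‖ ^ 2 : ℝ) ^ (-p / 2) := by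
    funext z
    rw [← Real.rpow_natCast ‖z‖ 2, ← Real.rpow_mul (norm_nonneg z)]
    congr 1
    push_cast
    ring
  have h1 : HasFDerivAt (fun z : F => (‖z‖ ^ 2 : ℝ)) (2 • innerSL ℝ y) y :=
    (hasStrictFDerivAt_norm_sq y).hasFDerivAt
  have h2 : HasDerivAt (fun t : ℝ => t ^ (-p / 2))
      ((-p / 2) * (‖y‖ ^ 2) ^ (-p / 2 - 1)) (‖y‖ ^ 2) :=
    Real.hasDerivAt_rpow_const (Or.inl (by positivity))
  have h3 := h2.comp_hasFDerivAt y h1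
  rw [hfun]
  refine h3.congr_fderiv ?_
  have hpow : ((‖y‖ ^ 2 : ℝ)) ^ (-p / 2 - 1) = ‖y‖ ^ (-p - 2) := by
    rw [← Real.rpow_natCast ‖y‖ 2, ← Real.rpow_mul (norm_nonneg y)]
    congr 1
    push_cast
    ring
  ext z
  simp [hpow, smul_smul]
  ring

end

noncomputable section
variable {F : Type*} [NormedAddCommGroup F] [InnerProductSpace ℝ F]

lemma second_deriv_lower {α : ℝ} (hα : 0 < α) {x : F} (hx : x ≠ 0) :
    α * (α + 1) * ‖x‖ ^ (-α - 2) ≤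
      ‖iteratedFDeriv ℝ 2 (fun y : F => ‖y‖ ^ (-α)) x‖ := by
  have hxn : (0 : ℝ) < ‖x‖ := norm_pos_iff.2 hx
  set f : F → ℝ := fun y => ‖y‖ ^ (-α) with hf
  set G : F → (F →L[ℝ] ℝ) := fun y => (-α * ‖y‖ ^ (-α - 2)) • innerCLM F y with hGdef
  -- the fderiv of f agrees with G near x
  have hev : fderiv ℝ f =ᶠ[nhds x] G := by
    filter_upwards [IsOpen.mem_nhds isOpen_compl_singleton hx] with y hy
    exact (hasFDerivAt_norm_rpow_neg hα hy).fderiv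
  -- derivative of the coefficient
  have hcoef : HasFDerivAt (fun y : F => -α * ‖y‖ ^ (-α - 2))
      ((-α) • ((-(α + 2) * ‖x‖ ^ (-(α + 2) - 2)) • innerCLM F x)) x := by
    have h1 : HasFDerivAt (fun z : F => ‖z‖ ^ (-(α + 2)))
        ((-(α + 2) * ‖x‖ ^ (-(α + 2) - 2)) • innerCLM F x) x :=
      hasFDerivAt_norm_rpow_neg (by linarith) hx
    have h2 := h1.const_mul (-α)
    refine h2.congr_of_eventuallyEq (Filter.Eventually.of_forall fun y => ?_)
    ring_nf
  have hL : HasFDerivAt (fun y : F => innerCLM F y) (innerCLM F) x :=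
    (innerCLM F).hasFDerivAt
  have hGx : HasFDerivAt G
      ((-α * ‖x‖ ^ (-α - 2)) • innerCLM F +
        ((-α) • ((-(α + 2) * ‖x‖ ^ (-(α + 2) - 2)) • innerCLM F x)).smulRight
          (innerCLM F x)) x := hcoef.smul hL
  have h2x : fderiv ℝ (fderiv ℝ f) x =
      (-α * ‖x‖ ^ (-α - 2)) • innerCLM F +
        ((-α) • ((-(α + 2) * ‖x‖ ^ (-(α + 2) - 2)) • innerCLM F x)).smulRight
          (innerCLM F x) := by
    rw [hev.fderiv_eq]
    exact hGx.fderiv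
  set u : F := ‖x‖⁻¹ • x with hu
  have hun : ‖u‖ = 1 := by
    simp [hu, norm_smul, abs_of_nonneg (inv_nonneg.2 hxn.le), inv_mul_cancel₀ hxn.ne']
  have hxu : (inner ℝ x u : ℝ) = ‖x‖ := by
    rw [hu, real_inner_smul_right, real_inner_self_eq_norm_sq]
    field_simp
  have huu : (inner ℝ u u : ℝ) = 1 := by
    rw [real_inner_self_eq_norm_sq, hun]; norm_num
  have hval : iteratedFDeriv ℝ 2 f x ![u, u] = α * (α + 1) * ‖x‖ ^ (-α - 2) := by
    rw [iteratedFDeriv_two_apply, h2x]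
    simp only [ContinuousLinearMap.add_apply, ContinuousLinearMap.smul_apply,
      ContinuousLinearMap.smulRight_apply, Matrix.cons_val_zero, Matrix.cons_val_one,
      Matrix.head_cons, innerCLM_apply, smul_eq_mul]
    rw [hxu, huu]
    have hsplit : ‖x‖ ^ (-(α + 2) - 2) = ‖x‖ ^ (-α - 2) * ‖x‖⁻¹ * ‖x‖⁻¹ := by
      rw [show (-(α + 2) - 2 : ℝ) = (-α - 2) + (-1) + (-1) by ring,
        Real.rpow_add hxn, Real.rpow_add hxn, Real.rpow_neg_one]
    rw [hsplit]
    field_simp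
    ring
  calc α * (α + 1) * ‖x‖ ^ (-α - 2) = iteratedFDeriv ℝ 2 f x ![u, u] := hval.symm
    _ ≤ ‖iteratedFDeriv ℝ 2 f x ![u, u]‖ := le_abs_self _
    _ ≤ ‖iteratedFDeriv ℝ 2 f x‖ * ∏ i, ‖(![u, u]) i‖ :=
        (iteratedFDeriv ℝ 2 f x).le_opNorm _
    _ = ‖iteratedFDeriv ℝ 2 f x‖ := by
        simp [Fin.prod_univ_two, hun]

end

open Real in
lemma not_integrableOn_rpow_ball (m : ℕ) (hm : 1 ≤ m) {β : ℝ} (hβ : (m : ℝ) < β) :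
    ¬ IntegrableOn (fun x : EuclideanSpace ℝ (Fin m) => ‖x‖ ^ (-β))
      (Metric.ball 0 1) volume := by
  intro h
  set E := EuclideanSpace ℝ (Fin m)
  have hdim : Module.finrank ℝ E = m := finrank_euclideanSpace_fin
  haveI : Nontrivial E := Module.nontrivial_of_finrank_pos (by omega : 0 < Module.finrank ℝ E)
  have hβ0 : (0 : ℝ) < β := lt_of_le_of_lt (by exact_mod_cast Nat.cast_nonneg m) hβ
  set v : ENNReal := volume (Metric.ball (0 : E) 1) with hv
  have hv0 : 0 < v := measure_ball_pos _ _ one_pos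
  have hvt : v ≠ ⊤ := measure_ball_lt_top.ne
  set w : ℝ := v.toReal with hw
  have hw0 : 0 < w := ENNReal.toReal_pos hv0.ne' hvt
  set C : ℝ := ∫ x in Metric.ball (0 : E) 1, ‖x‖ ^ (-β) with hC
  set r : ℕ → ℝ := fun k => (2 : ℝ) ^ (-(k : ℝ)) with hr
  have hr0 : ∀ k, 0 < r k := fun k => rpow_pos_of_pos two_pos _
  have hrlt : ∀ k, r (k + 1) < r k := fun k => by
    apply rpow_lt_rpow_of_exponent_lt one_lt_two
    push_cast; linarith
  have hr1 : ∀ k, r k ≤ 1 := fun k =>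
    rpow_le_one_of_one_le_of_nonpos one_le_two (by simp)
  have key : ∀ k : ℕ, ((2 : ℝ) ^ (β - m)) ^ k * ((1 - (2 : ℝ) ^ (-(m : ℝ))) * w) ≤ C := by
    intro k
    set A : Set E := Metric.ball 0 (r k) \ Metric.closedBall 0 (r (k + 1)) with hA
    have hAsub : A ⊆ Metric.ball (0 : E) 1 :=
      Set.diff_subset.trans (Metric.ball_subset_ball (hr1 k))
    have hAmeas : MeasurableSet A := measurableSet_ball.diff measurableSet_closedBall
    have hball : volume (Metric.ball (0 : E) (r k)) = ENNReal.ofReal (r k ^ m) * v := by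
      rw [Measure.addHaar_ball_of_pos _ _ (hr0 k), hdim]
    have hcball : volume (Metric.closedBall (0 : E) (r (k + 1)))
        = ENNReal.ofReal (r (k + 1) ^ m) * v := by
      rw [Measure.addHaar_closedBall _ _ (hr0 (k + 1)).le, hdim]
    have hsub' : Metric.closedBall (0 : E) (r (k + 1)) ⊆ Metric.ball 0 (r k) :=
      Metric.closedBall_subset_ball (hrlt k)
    have hμA : volume A = ENNReal.ofReal (r k ^ m) * v - ENNReal.ofReal (r (k + 1) ^ m) * v := by
      rw [hA, measure_diff hsub' measurableSet_closedBall.nullMeasurableSet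
        measure_closedBall_lt_top.ne, hball, hcball]
    have hle : ENNReal.ofReal (r (k + 1) ^ m) * v ≤ ENNReal.ofReal (r k ^ m) * v := by
      rw [← hcball, ← hball]; exact measure_mono hsub'
    have hμAtop : volume A ≠ ⊤ := by
      rw [hμA]
      exact (tsub_le_self.trans_lt (by
        exact ENNReal.mul_lt_top ENNReal.ofReal_lt_top hvt.lt_top)).ne
    have hμAtoReal : (volume A).toReal = r k ^ m * w - r (k + 1) ^ m * w := by
      rw [hμA, ENNReal.toReal_sub_of_le hle (ENNReal.mul_ne_top ENNReal.ofReal_ne_top hvt),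
        ENNReal.toReal_mul, ENNReal.toReal_mul, ENNReal.toReal_ofReal (by positivity),
        ENNReal.toReal_ofReal (by positivity)]
    have hlow : ∀ x ∈ A, (r k) ^ (-β) ≤ ‖x‖ ^ (-β) := by
      intro x hxA
      obtain ⟨hx1, hx2⟩ := hxA
      rw [Metric.mem_ball, dist_zero_right] at hx1
      rw [Metric.mem_closedBall, dist_zero_right, not_le] at hx2
      exact rpow_le_rpow_of_nonpos (lt_trans (hr0 (k + 1)) hx2) hx1.le (by linarith)
    have hIA : IntegrableOn (fun x : E => ‖x‖ ^ (-β)) A volume := h.mono_set hAsub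
    have h1 : (r k) ^ (-β) * (volume A).toReal ≤ ∫ x in A, ‖x‖ ^ (-β) :=
      by rw [mul_comm]; exact setIntegral_ge_of_const_le hAmeas hμAtop hlow hIA
    have h2 : (∫ x in A, ‖x‖ ^ (-β)) ≤ C := by
      apply setIntegral_mono_set h
        (Filter.Eventually.of_forall fun x => rpow_nonneg (norm_nonneg _) _)
        (HasSubset.Subset.eventuallyLE hAsub)
    refine le_trans (le_of_eq ?_) (h1.trans h2)
    rw [hμAtoReal]
    -- now pure rpow algebra
    have e1 : (r k) ^ (-β) = (2 : ℝ) ^ ((k : ℝ) * β) := by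
      rw [hr, ← rpow_mul (by norm_num : (0:ℝ) ≤ 2)]
      ring_nf
    have e2 : r k ^ m = (2 : ℝ) ^ (-(k : ℝ) * m) := by
      rw [hr, ← rpow_natCast ((2:ℝ) ^ (-(k:ℝ))) m, ← rpow_mul (by norm_num : (0:ℝ) ≤ 2)]
    have e3 : r (k + 1) ^ m = (2 : ℝ) ^ (-((k : ℝ) + 1) * m) := by
      rw [hr, ← rpow_natCast ((2:ℝ) ^ (-((k:ℕ)+1 : ℕ) : ℝ)) m,
        ← rpow_mul (by norm_num : (0:ℝ) ≤ 2)]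
      push_cast
      ring_nf
    have e4 : ((2 : ℝ) ^ (β - m)) ^ k = (2 : ℝ) ^ ((β - m) * k) := by
      rw [← rpow_natCast ((2:ℝ) ^ (β - m)) k, ← rpow_mul (by norm_num : (0:ℝ) ≤ 2)]
    rw [e1, e2, e3, e4, mul_sub]
    have f1 : (2:ℝ) ^ ((k:ℝ) * β) * ((2:ℝ) ^ (-(k:ℝ) * m) * w)
        = (2:ℝ) ^ ((β - m) * k) * w := by
      rw [← mul_assoc, ← rpow_add two_pos]
      congr 2
      ring
    have f2 : (2:ℝ) ^ ((k:ℝ) * β) * ((2:ℝ) ^ (-((k:ℝ) + 1) * m) * w)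
        = (2:ℝ) ^ ((β - m) * k) * ((2:ℝ) ^ (-(m:ℝ)) * w) := by
      rw [← mul_assoc, ← rpow_add two_pos, ← mul_assoc, ← rpow_add two_pos]
      congr 2
      ring
    rw [f1, f2]
    ring
  -- contradiction
  have hc0 : 0 < (1 - (2 : ℝ) ^ (-(m : ℝ))) * w := by
    have : (2 : ℝ) ^ (-(m : ℝ)) < 1 := by
      apply rpow_lt_one_of_one_lt_of_neg one_lt_two
      simp only [neg_neg, Left.neg_neg_iff]
      exact_mod_cast hm
    nlinarith
  have ht1 : 1 < (2 : ℝ) ^ (β - m) := by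
    rw [show (1 : ℝ) = (2 : ℝ) ^ (0 : ℝ) by simp]
    exact rpow_lt_rpow_of_exponent_lt one_lt_two (by linarith)
  obtain ⟨k, hk⟩ := pow_unbounded_of_one_lt (C / ((1 - (2 : ℝ) ^ (-(m : ℝ))) * w)) ht1
  have := key k
  rw [← le_div_iff₀ hc0] at this
  exact absurd this (not_le.2 hk)

/-- For `f(x) = ‖x‖^{-α}` on `ℝᵐ` with `α > 0` and `α > m - 2`, the norm of the second
iterated Fréchet derivative of `f` is not Lebesgue-integrable on the unit ball. -/
theorem rpow_not_integrable_second (m : ℕ) (hm : 1 ≤ m) (α : ℝ) (hα : 0 < α)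
    (hα' : (m : ℝ) - 2 < α) :
    ¬ IntegrableOn
        (fun x : EuclideanSpace ℝ (Fin m) =>
          ‖iteratedFDeriv ℝ 2 (fun y : EuclideanSpace ℝ (Fin m) => ‖y‖ ^ (-α)) x‖)
        (Metric.ball 0 1) volume := by
  intro h
  set E := EuclideanSpace ℝ (Fin m)
  have hdim : Module.finrank ℝ E = m := finrank_euclideanSpace_fin
  haveI : Nontrivial E := Module.nontrivial_of_finrank_pos (by omega : 0 < Module.finrank ℝ E)
  set k : ℝ := α * (α + 1) with hk
  have hk0 : 0 < k := by nlinarith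
  -- the scaled power function is integrable by comparison
  have h1 : IntegrableOn (fun x : E => k * ‖x‖ ^ (-α - 2)) (Metric.ball 0 1) volume := by
    apply Integrable.mono' h
    · exact ((measurable_norm.pow_const (-α - 2)).const_mul k).aestronglyMeasurable
    · have hae : ∀ᵐ x : E ∂(volume.restrict (Metric.ball 0 1)), x ≠ 0 := by
        refine ae_restrict_of_ae ?_
        have : volume ({0} : Set E) = 0 := measure_singleton 0
        filter_upwards [measure_eq_zero_iff_ae_notMem.mp this] with x hx
        simpa using hx
      filter_upwards [hae] with x hx
      rw [Real.norm_eq_abs, abs_of_nonneg (by positivity)]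
      exact second_deriv_lower hα hx
  have h2 : IntegrableOn (fun x : E => ‖x‖ ^ (-(α + 2))) (Metric.ball 0 1) volume := by
    have := h1.const_mul k⁻¹
    apply this.congr
    apply Filter.Eventually.of_forall
    intro x
    show k⁻¹ * (k * ‖x‖ ^ (-α - 2)) = ‖x‖ ^ (-(α + 2))
    rw [← mul_assoc, inv_mul_cancel₀ hk0.ne', one_mul]
    congr 1
    ring
  exact not_integrableOn_rpow_ball m hm (by linarith) h2
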